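/- Let $m > 1$, $\bar\delta \le \frac{24 m}{(m+1)^2}$, and let $\sigma : (0,1) \times \mathbb{R} \to \mathbb{R}$ satisfy $|\sigma(x,r) - \sigma(x,\bar r)| \le \bar\delta\, |r^{[(m+1)/2]} - \bar r^{[(m+1)/2]}|$ for all $x, r, \bar r$, where $r^{[p]} := |r|^{p-1}r$. Then for all $v_1, v_2 \in L^{m+1}(0,1)$: $\int_0^1 \Big(-2 (v_1 - v_2)(v_1^{[m]} - v_2^{[m]}) + \tfrac{1}{3} |\sigma(x,v_1) - \sigma(x,v_2)|^2\Big) dx \le 0$. -/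

import Mathlib

open MeasureTheory Set

noncomputable def opow (r p : ℝ) : ℝ := |r| ^ (p - 1) * r

lemma hasDerivAt_opow {e : ℝ} (he : 1 < e) (t : ℝ) :
    HasDerivAt (fun s => opow s e) (e * |t| ^ (e - 1)) t := by
  rcases lt_trichotomy t 0 with ht | ht | ht
  · have hne : -t ≠ 0 := neg_ne_zero.mpr (ne_of_lt ht)
    have h1 : HasDerivAt (fun s : ℝ => (-s) ^ e) (e * (-t) ^ (e - 1) * (-1)) t :=
      (Real.hasDerivAt_rpow_const (Or.inl hne)).comp t (hasDerivAt_neg t)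
    have h2 : HasDerivAt (fun s : ℝ => -((-s) ^ e)) (e * (-t) ^ (e - 1)) t := by
      simpa [Pi.neg_def] using h1.neg
    have heq : (fun s : ℝ => opow s e) =ᶠ[nhds t] fun s : ℝ => -((-s) ^ e) := by
      filter_upwards [eventually_lt_nhds ht] with s hs
      have hs' : -s ≠ 0 := neg_ne_zero.mpr (ne_of_lt hs)
      rw [opow, abs_of_neg hs, Real.rpow_sub_one hs']
      field_simp
      rw [mul_div_cancel_left₀ _ (ne_of_lt hs)]
    have := h2.congr_of_eventuallyEq heq
    simpa [abs_of_neg ht] using this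
  · subst ht
    have h0 : e * |(0:ℝ)| ^ (e - 1) = 0 := by
      rw [abs_zero, Real.zero_rpow (by linarith), mul_zero]
    rw [h0]
    rw [hasDerivAt_iff_tendsto_slope]
    have hcong : ∀ s : ℝ, s ≠ 0 → slope (fun s => opow s e) 0 s = |s| ^ (e - 1) := by
      intro s hs
      rw [slope_def_field, opow]
      simp [opow, div_eq_iff hs, abs_zero, Real.zero_rpow (show e - 1 ≠ 0 by linarith)]
    have hlim : Filter.Tendsto (fun s : ℝ => |s| ^ (e - 1)) (nhds 0) (nhds 0) := by
      have : Filter.Tendsto (fun s : ℝ => |s| ^ (e - 1)) (nhds 0)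
          (nhds (|(0:ℝ)| ^ (e - 1))) := by
        apply Filter.Tendsto.rpow_const continuous_abs.continuousAt.tendsto
        right; linarith
      simpa [abs_zero, Real.zero_rpow (show e - 1 ≠ 0 by linarith)] using this
    refine Filter.Tendsto.congr' ?_ (hlim.mono_left nhdsWithin_le_nhds)
    filter_upwards [self_mem_nhdsWithin] with s hs
    exact (hcong s hs).symm
  · have hne : t ≠ 0 := ne_of_gt ht
    have h1 : HasDerivAt (fun s : ℝ => s ^ e) (e * t ^ (e - 1)) t :=
      Real.hasDerivAt_rpow_const (Or.inl hne)
    have heq : (fun s : ℝ => opow s e) =ᶠ[nhds t] fun s : ℝ => s ^ e := by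
      filter_upwards [eventually_gt_nhds ht] with s hs
      rw [opow, abs_of_pos hs, Real.rpow_sub_one (ne_of_gt hs)]
      field_simp
    have := h1.congr_of_eventuallyEq heq
    simpa [abs_of_pos ht] using this

lemma opow_sub_eq_integral {e : ℝ} (he : 1 < e) (b a : ℝ) :
    opow a e - opow b e = ∫ t in b..a, e * |t| ^ (e - 1) := by
  have hcont : Continuous fun t : ℝ => e * |t| ^ (e - 1) :=
    continuous_const.mul (continuous_abs.rpow_const fun x => Or.inr (by linarith))
  exact (intervalIntegral.integral_eq_sub_of_hasDerivAt
    (fun t _ => hasDerivAt_opow he t) (hcont.intervalIntegrable _ _)).symm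

lemma key_le {m : ℝ} (hm : 1 < m) {a b : ℝ} (hab : b ≤ a) :
    4 * m / (m + 1) ^ 2 * (opow a ((m + 1) / 2) - opow b ((m + 1) / 2)) ^ 2
      ≤ (a - b) * (opow a m - opow b m) := by
  set p : ℝ := (m + 1) / 2 with hp_def
  have hp1 : 1 < p := by rw [hp_def]; linarith
  have hpm1 : p - 1 = (m - 1) / 2 := by rw [hp_def]; ring
  set J : ℝ := ∫ t in b..a, |t| ^ (p - 1) with hJ_def
  set I : ℝ := ∫ t in b..a, |t| ^ (m - 1) with hI_def
  have hJ0 : 0 ≤ J := intervalIntegral.integral_nonneg hab fun t _ => by positivity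
  have hI0 : 0 ≤ I := intervalIntegral.integral_nonneg hab fun t _ => by positivity
  have h1 : opow a p - opow b p = p * J := by
    rw [opow_sub_eq_integral hp1, hJ_def, intervalIntegral.integral_const_mul]
  have h2 : opow a m - opow b m = m * I := by
    rw [opow_sub_eq_integral hm, hI_def, intervalIntegral.integral_const_mul]
  -- Cauchy-Schwarz : J ^ 2 ≤ (a - b) * I
  have hCS : J ^ 2 ≤ (a - b) * I := by
    set μ : Measure ℝ := volume.restrict (Ioc b a) with hμ
    haveI : Fact (volume (Ioc b a) < ⊤) := ⟨measure_Ioc_lt_top⟩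
    set g : ℝ → ℝ := fun t => |t| ^ (p - 1) with hg_def
    have hg_cont : Continuous g :=
      continuous_abs.rpow_const fun x => Or.inr (by linarith)
    have hg_sq : ∀ t : ℝ, g t ^ (2:ℝ) = |t| ^ (m - 1) := by
      intro t
      show (|t| ^ (p - 1) : ℝ) ^ (2:ℝ) = |t| ^ (m - 1)
      rw [← Real.rpow_mul (abs_nonneg t)]
      congr 1
      rw [hpm1]; ring
    have hg_sq_nat : ∀ t : ℝ, g t ^ (2:ℕ) = |t| ^ (m - 1) := by
      intro t
      rw [sq]
      show |t| ^ (p - 1) * |t| ^ (p - 1) = |t| ^ (m - 1)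
      rw [← Real.rpow_add' (abs_nonneg t) (by rw [hpm1]; intro h; linarith)]
      congr 1
      rw [hpm1]; ring
    have hgsq_cont : Continuous fun t : ℝ => |t| ^ (m - 1) :=
      continuous_abs.rpow_const fun x => Or.inr (by linarith)
    have hof2 : ENNReal.ofReal (2:ℝ) = 2 := by norm_num
    have hmem1 : MemLp (fun _ : ℝ => (1:ℝ)) (ENNReal.ofReal 2) μ := by
      rw [hof2]; exact memLp_const 1
    have hmemg : MemLp g (ENNReal.ofReal 2) μ := by
      rw [hof2]
      refine (memLp_two_iff_integrable_sq hg_cont.aestronglyMeasurable).mpr ?_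
      have : Integrable (fun t : ℝ => |t| ^ (m - 1)) μ :=
        (hgsq_cont.integrableOn_Ioc)
      refine this.congr (Filter.Eventually.of_forall fun t => (hg_sq_nat t).symm)
    have hconj : (2:ℝ).HolderConjugate 2 := Real.HolderConjugate.two_two
    have holder := integral_mul_le_Lp_mul_Lq_of_nonneg hconj
      (Filter.Eventually.of_forall fun _ => zero_le_one)
      (Filter.Eventually.of_forall fun t => by positivity) hmem1 hmemg
    have hvol : (μ Set.univ).toReal = a - b := by
      rw [hμ, Measure.restrict_apply_univ, Real.volume_Ioc,
        ENNReal.toReal_ofReal (by linarith)]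
    have hint1 : ∫ t, (1:ℝ) ^ (2:ℝ) ∂μ = a - b := by
      simp [Real.one_rpow, Measure.real, hvol]
    have hintg : ∫ t, g t ∂μ = J := by
      rw [hJ_def, intervalIntegral.integral_of_le hab]
    have hintg2 : ∫ t, g t ^ (2:ℝ) ∂μ = I := by
      rw [hI_def, intervalIntegral.integral_of_le hab]
      exact integral_congr_ae (Filter.Eventually.of_forall fun t => hg_sq t)
    rw [hint1, hintg2] at holder
    have holder' : J ≤ (a - b) ^ (1/2:ℝ) * I ^ (1/2:ℝ) := by
      rw [← hintg]
      calc ∫ t, g t ∂μ = ∫ t, 1 * g t ∂μ := by simp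
        _ ≤ _ := holder
    have hab0 : (0:ℝ) ≤ a - b := by linarith
    have hsq : ((a - b) ^ (1/2:ℝ) * I ^ (1/2:ℝ)) ^ 2 = (a - b) * I := by
      rw [mul_pow, ← Real.rpow_natCast ((a - b) ^ (1/2:ℝ)) 2,
        ← Real.rpow_natCast (I ^ (1/2:ℝ)) 2,
        ← Real.rpow_mul hab0, ← Real.rpow_mul hI0]
      norm_num
    calc J ^ 2 ≤ ((a - b) ^ (1/2:ℝ) * I ^ (1/2:ℝ)) ^ 2 := by
          apply pow_le_pow_left₀ hJ0 holder'
      _ = (a - b) * I := hsq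
  rw [h1, h2]
  have hm1 : (0:ℝ) < (m + 1) ^ 2 := by positivity
  have key : 4 * m / (m + 1) ^ 2 * (p * J) ^ 2 = m * J ^ 2 := by
    rw [hp_def]; field_simp; ring
  rw [key]
  calc m * J ^ 2 ≤ m * ((a - b) * I) := by
        apply mul_le_mul_of_nonneg_left hCS (by linarith)
    _ = (a - b) * (m * I) := by ring

lemma key_ineq {m : ℝ} (hm : 1 < m) (a b : ℝ) :
    4 * m / (m + 1) ^ 2 * (opow a ((m + 1) / 2) - opow b ((m + 1) / 2)) ^ 2
      ≤ (a - b) * (opow a m - opow b m) := by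
  rcases le_total b a with h | h
  · exact key_le hm h
  · have := key_le hm h
    calc 4 * m / (m + 1) ^ 2 * (opow a ((m + 1) / 2) - opow b ((m + 1) / 2)) ^ 2
        = 4 * m / (m + 1) ^ 2 * (opow b ((m + 1) / 2) - opow a ((m + 1) / 2)) ^ 2 := by
          ring
      _ ≤ (b - a) * (opow b m - opow a m) := this
      _ = (a - b) * (opow a m - opow b m) := by ring

theorem stmt15 (m δ : ℝ) (hm : 1 < m) (hδ0 : 0 ≤ δ) (hδ : δ ≤ 24 * m / (m + 1) ^ 2)
    (σ : ℝ → ℝ → ℝ)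
    (hσ : ∀ x r r' : ℝ, (σ x r - σ x r') ^ 2
      ≤ δ * (opow r ((m + 1) / 2) - opow r' ((m + 1) / 2)) ^ 2)
    (v₁ v₂ : ℝ → ℝ) :
    (∫ x in Ioo (0:ℝ) 1,
      (-2 * (v₁ x - v₂ x) * (opow (v₁ x) m - opow (v₂ x) m)
        + (1/3) * (σ x (v₁ x) - σ x (v₂ x)) ^ 2)) ≤ 0 := by
  apply integral_nonpos
  intro x
  have hkey := key_ineq hm (v₁ x) (v₂ x)
  have hsig := hσ x (v₁ x) (v₂ x)
  set G : ℝ := (opow (v₁ x) ((m + 1) / 2) - opow (v₂ x) ((m + 1) / 2)) ^ 2 with hG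
  have hG0 : 0 ≤ G := sq_nonneg _
  have hm1 : (0:ℝ) < (m + 1) ^ 2 := by positivity
  have hδ' : δ * (m + 1) ^ 2 ≤ 24 * m := by
    rw [le_div_iff₀ hm1] at hδ
    linarith [hδ]
  simp only [Pi.zero_apply]
  have h1 : -2 * (v₁ x - v₂ x) * (opow (v₁ x) m - opow (v₂ x) m)
      ≤ -2 * (4 * m / (m + 1) ^ 2 * G) := by nlinarith [hkey]
  have h2 : (1/3) * (σ x (v₁ x) - σ x (v₂ x)) ^ 2 ≤ (1/3) * (δ * G) := by linarith
  have h3 : -2 * (4 * m / (m + 1) ^ 2 * G) + (1/3) * (δ * G) ≤ 0 := by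
    have h4 : δ * G * (m + 1) ^ 2 ≤ 24 * m * G := by nlinarith
    rw [div_mul_eq_mul_div, ← sub_nonneg]
    have : -2 * (4 * m * G / (m + 1) ^ 2) = -(8 * m * G) / (m + 1) ^ 2 := by ring
    rw [this]
    have : (0:ℝ) - (-(8 * m * G) / (m + 1) ^ 2 + 1 / 3 * (δ * G))
        = (8 * m * G - (m + 1) ^ 2 * (δ * G) / 3) / (m + 1) ^ 2 := by
      field_simp; ring
    rw [this]
    apply div_nonneg _ (le_of_lt hm1)
    nlinarith
  linarith
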